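/- Let K be a global field, 𝔭 a non-archimedean place of K, and φ : P^1 → P^1 a morphism defined over K with good reduction at 𝔭. Then for any P, Q ∈ P^1(K), one has δ_𝔭(φ(P), φ(Q)) ≥ δ_𝔭(P, Q). -/

import Mathlib

/-!
Common definitions used to formalize the statements of
"Preperiodic points for rational functions defined over a global field
in terms of good reduction" (arXiv:1403.2293).

* A (normalized, non-archimedean) place of a field `K` is modeled as a surjective
  discrete valuation `v : K → ℤ` (with the junk convention `v 0 = 0`).
* `P1 K` is the projective line over `K`; a point `[x : y]` is `P1.mk x y _`.
* An endomorphism of `P1` defined over `K` is a map `φ : P1 K → P1 K` admitting a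
  lift by a pair of binary forms of a common degree `d`, given through their
  coefficient vectors, with nonvanishing resultant (the resultant is defined as
  the determinant of the Sylvester matrix).
* `φ` has good reduction at a place `pl` if it admits a lift whose coefficients
  are `pl`-integral and whose resultant is a `pl`-unit.
* `logDist` is the `𝔭`-adic logarithmic distance `δ_𝔭`; two points of `P1 K` have
  the same reduction modulo `pl` if and only if `0 < logDist pl P Q`.
* The multiplier of a fixed point `[x:y]` of a map lifted by the forms `(a, b)` of
  degree `d` is computed by the trace formula
  `λ = (∂F/∂x (x,y) + ∂G/∂y (x,y) - d⬝c)/c`, where `c` is the scalar with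
  `F(x,y) = c⬝x` and `G(x,y) = c⬝y`.
-/

namespace ArxivPreper

/-- A normalized non-archimedean place of `K`: a surjective discrete valuation
`v : K → ℤ`, with the junk convention `v 0 = 0`. -/
structure Place (K : Type*) [Field K] where
  v : K → ℤ
  v_zero : v 0 = 0
  v_mul : ∀ x y : K, x ≠ 0 → y ≠ 0 → v (x * y) = v x + v y
  v_add : ∀ x y : K, x ≠ 0 → y ≠ 0 → x + y ≠ 0 → min (v x) (v y) ≤ v (x + y)
  v_surj : ∀ n : ℤ, ∃ x : K, x ≠ 0 ∧ v x = n

namespace Place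

variable {K : Type*} [Field K] (pl : Place K)

lemma v_one : pl.v 1 = 0 := by
  have h := pl.v_mul 1 1 one_ne_zero one_ne_zero
  rw [one_mul] at h
  omega

lemma v_neg_one : pl.v (-1 : K) = 0 := by
  have h := pl.v_mul (-1 : K) (-1) (by norm_num) (by norm_num)
  rw [show ((-1 : K) * (-1)) = 1 by ring, pl.v_one] at h
  omega

lemma v_neg (x : K) : pl.v (-x) = pl.v x := by
  by_cases h : x = 0
  · simp [h]
  · have h1 := pl.v_mul (-1) x (by norm_num) h
    rw [show (-1 : K) * x = -x by ring, pl.v_neg_one] at h1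
    omega

lemma v_mul_nonneg {x y : K} (hx : 0 ≤ pl.v x) (hy : 0 ≤ pl.v y) : 0 ≤ pl.v (x * y) := by
  by_cases h1 : x = 0
  · simp [h1, pl.v_zero]
  by_cases h2 : y = 0
  · simp [h2, pl.v_zero]
  rw [pl.v_mul x y h1 h2]
  omega

lemma v_add_nonneg {x y : K} (hx : 0 ≤ pl.v x) (hy : 0 ≤ pl.v y) : 0 ≤ pl.v (x + y) := by
  by_cases h1 : x = 0
  · simpa [h1] using hy
  by_cases h2 : y = 0
  · simpa [h2] using hx
  by_cases h3 : x + y = 0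
  · rw [h3, pl.v_zero]
  exact le_trans (le_min hx hy) (pl.v_add x y h1 h2 h3)

lemma hred_add {a b : K} (ha : a = 0 ∨ 0 < pl.v a) (hb : b = 0 ∨ 0 < pl.v b) :
    a + b = 0 ∨ 0 < pl.v (a + b) := by
  rcases ha with ha | ha
  · subst ha; simpa using hb
  rcases hb with hb | hb
  · subst hb; simpa using Or.inr ha
  by_cases h3 : a + b = 0
  · exact Or.inl h3
  · right
    have hA : a ≠ 0 := by
      intro h; rw [h, pl.v_zero] at ha; exact absurd ha (lt_irrefl 0)
    have hB : b ≠ 0 := by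
      intro h; rw [h, pl.v_zero] at hb; exact absurd hb (lt_irrefl 0)
    exact lt_of_lt_of_le (lt_min ha hb) (pl.v_add a b hA hB h3)

lemma hred_mul {a b : K} (ha : 0 ≤ pl.v a) (hb : b = 0 ∨ 0 < pl.v b) :
    a * b = 0 ∨ 0 < pl.v (a * b) := by
  rcases hb with hb | hb
  · exact Or.inl (by rw [hb, mul_zero])
  by_cases h1 : a = 0
  · exact Or.inl (by rw [h1, zero_mul])
  by_cases h2 : b = 0
  · exact Or.inl (by rw [h2, mul_zero])
  · right
    rw [pl.v_mul a b h1 h2]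
    omega

end Place

/-- `K` is a global field: a number field, or a finite extension of `𝔽_p(t)`. -/
def IsGlobalField (K : Type*) [Field K] : Prop :=
  NumberField K ∨
    ∃ (p : ℕ) (hp : Fact p.Prime),
      letI := hp
      ∃ A : Algebra (RatFunc (ZMod p)) K,
        letI := A
        FiniteDimensional (RatFunc (ZMod p)) K

variable {K : Type*} [Field K]

/-- The projective line over `K`. -/
abbrev P1 (K : Type*) [Field K] := Projectivization K (Fin 2 → K)

/-- The point `[x : y]` of the projective line. -/
def P1.mk (x y : K) (h : ¬(x = 0 ∧ y = 0)) : P1 K :=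
  Projectivization.mk K ![x, y]
    (fun h0 => h ⟨by simpa using congrFun h0 0, by simpa using congrFun h0 1⟩)

/-- The point `[0 : 1]`. -/
def P1zero : P1 K := P1.mk 0 1 (fun h => one_ne_zero h.2)

/-- Value at `(x, y)` of the binary form of degree `d` with coefficient
vector `a` (the coefficient of `x^i y^(d-i)` is `a i`). -/
def formEval (d : ℕ) (a : Fin (d + 1) → K) (x y : K) : K :=
  ∑ i : Fin (d + 1), a i * x ^ (i : ℕ) * y ^ (d - (i : ℕ))

/-- The Sylvester matrix of two binary forms of degree `d`, given by their
coefficient vectors. -/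
def sylvester (d : ℕ) (a b : Fin (d + 1) → K) : Matrix (Fin (d + d)) (Fin (d + d)) K :=
  Matrix.of fun i j =>
    if hi : (i : ℕ) < d then
      if h : (i : ℕ) ≤ (j : ℕ) ∧ (j : ℕ) ≤ (i : ℕ) + d then a ⟨(j : ℕ) - (i : ℕ), by omega⟩
      else 0
    else
      if h : (i : ℕ) - d ≤ (j : ℕ) ∧ (j : ℕ) ≤ (i : ℕ) then
        b ⟨(j : ℕ) - ((i : ℕ) - d), by omega⟩
      else 0

/-- The resultant of two binary forms of degree `d`: the determinant of their
Sylvester matrix. -/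
def resultant (d : ℕ) (a b : Fin (d + 1) → K) : K := (sylvester d a b).det

/-- `(a, b)` is a pair of coefficient vectors of binary forms `F`, `G` of common degree `d`,
with nonzero resultant, such that `φ([x:y]) = [F(x,y) : G(x,y)]` on `P1 K`.  This witnesses
that `φ` is an endomorphism of the projective line defined over `K` (of degree `d`). -/
def IsLift (φ : P1 K → P1 K) (d : ℕ) (a b : Fin (d + 1) → K) : Prop :=
  resultant d a b ≠ 0 ∧
    ∀ (x y : K) (h : ¬(x = 0 ∧ y = 0)),
      ∃ h' : ¬(formEval d a x y = 0 ∧ formEval d b x y = 0),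
        φ (P1.mk x y h) = P1.mk (formEval d a x y) (formEval d b x y) h'

/-- `φ` is an endomorphism of `P1` defined over `K`. -/
def IsEndo (φ : P1 K → P1 K) : Prop := ∃ d a b, IsLift φ d a b

/-- `φ` has good reduction at the place `pl`: it can be written as `[F : G]` with `F`, `G`
binary forms of a common degree whose coefficients are `pl`-integral and whose resultant
is a `pl`-unit. -/
def GoodReduction (pl : Place K) (φ : P1 K → P1 K) : Prop :=
  ∃ (d : ℕ) (a b : Fin (d + 1) → K),
    IsLift φ d a b ∧ (∀ i, 0 ≤ pl.v (a i)) ∧ (∀ i, 0 ≤ pl.v (b i)) ∧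
      pl.v (resultant d a b) = 0

open Classical in
/-- The valuation of a place extended by `v 0 = ⊤`. -/
noncomputable def extv (pl : Place K) (x : K) : WithTop ℤ :=
  if x = 0 then ⊤ else (pl.v x : WithTop ℤ)

open Classical in
/-- `min (v x) (v y)` for a nonzero vector `(x, y)`, ignoring vanishing coordinates. -/
noncomputable def vminVec (pl : Place K) (w : Fin 2 → K) : ℤ :=
  if w 0 = 0 then pl.v (w 1)
  else if w 1 = 0 then pl.v (w 0)
  else min (pl.v (w 0)) (pl.v (w 1))

/-- The `𝔭`-adic logarithmic distance
`δ_𝔭(P,Q) = v(x₁y₂ - x₂y₁) - min (v x₁) (v y₁) - min (v x₂) (v y₂)`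
(computed on fixed representatives; it is independent of the choice of homogeneous
coordinates).  Note `δ_𝔭(P,Q) = ⊤` iff `P = Q`, and two points have the same reduction
modulo `pl` iff `0 < δ_𝔭(P,Q)`. -/
noncomputable def logDist (pl : Place K) (P Q : P1 K) : WithTop ℤ :=
  extv pl (P.rep 0 * Q.rep 1 - Q.rep 0 * P.rep 1) +
    ((-(vminVec pl P.rep) - vminVec pl Q.rep : ℤ) : WithTop ℤ)

/-- The forward orbit `{φ^n(P) : n ∈ ℕ}` of `P` under `φ`. -/
def orbit (φ : P1 K → P1 K) (P : P1 K) : Set (P1 K) := Set.range fun n : ℕ => φ^[n] P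

/-- `P` is preperiodic for `φ`: its forward orbit is finite. -/
def Preperiodic (φ : P1 K → P1 K) (P : P1 K) : Prop := (orbit φ P).Finite

/-- `P` is periodic for `φ`. -/
def PeriodicPt (φ : P1 K → P1 K) (P : P1 K) : Prop := ∃ n : ℕ, 0 < n ∧ φ^[n] P = P

/-- `x` is an `S`-unit of `K`. -/
def IsSUnit (S : Finset (Place K)) (x : K) : Prop :=
  x ≠ 0 ∧ ∀ pl : Place K, pl ∉ S → pl.v x = 0

/-- The ring of `S`-integers of `K`. -/
def SIntegers (S : Finset (Place K)) : Subring K where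
  carrier := {x : K | ∀ pl : Place K, pl ∉ S → 0 ≤ pl.v x}
  zero_mem' := fun pl _ => le_of_eq pl.v_zero.symm
  one_mem' := fun pl _ => le_of_eq pl.v_one.symm
  add_mem' := fun hx hy pl hpl => pl.v_add_nonneg (hx pl hpl) (hy pl hpl)
  mul_mem' := fun hx hy pl hpl => pl.v_mul_nonneg (hx pl hpl) (hy pl hpl)
  neg_mem' := fun {x} hx pl hpl => show 0 ≤ pl.v (-x) by rw [pl.v_neg]; exact hx pl hpl

/-- The local ring `R_𝔭 = {x : v_𝔭(x) ≥ 0}` at the place `pl`. -/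
def integersAt (pl : Place K) : Subring K where
  carrier := {x : K | 0 ≤ pl.v x}
  zero_mem' := le_of_eq pl.v_zero.symm
  one_mem' := le_of_eq pl.v_one.symm
  add_mem' := fun hx hy => pl.v_add_nonneg hx hy
  mul_mem' := fun hx hy => pl.v_mul_nonneg hx hy
  neg_mem' := fun {x} hx => show 0 ≤ pl.v (-x) by rw [pl.v_neg]; exact hx

/-- The maximal ideal `{x : v_𝔭(x) > 0}` of the local ring at `pl`. -/
def maxIdealAt (pl : Place K) : Ideal ↥(integersAt pl) where
  carrier := {x : ↥(integersAt pl) | (x : K) = 0 ∨ 0 < pl.v (x : K)}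
  zero_mem' := Or.inl rfl
  add_mem' := fun {a b} ha hb => by
    have h := pl.hred_add (a := (a : K)) (b := (b : K)) ha hb
    show ((a + b : ↥(integersAt pl)) : K) = 0 ∨ 0 < pl.v ((a + b : ↥(integersAt pl)) : K)
    push_cast
    exact h
  smul_mem' := fun c {x} hx => by
    have h := pl.hred_mul (a := (c : K)) (b := (x : K)) c.2 hx
    show ((c • x : ↥(integersAt pl)) : K) = 0 ∨ 0 < pl.v ((c • x : ↥(integersAt pl)) : K)
    rw [smul_eq_mul]
    push_cast
    exact h

/-- The residue field `k(𝔭)` at the place `pl`. -/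
def Residue (pl : Place K) : Type _ := ↥(integersAt pl) ⧸ maxIdealAt pl

/-- Value at `(x,y)` of `∂F/∂x` for the binary form `F` of degree `d` with coefficient
vector `a`. -/
def formEvalDx (d : ℕ) (a : Fin (d + 1) → K) (x y : K) : K :=
  ∑ i : Fin (d + 1), ((i : ℕ) : K) * a i * x ^ ((i : ℕ) - 1) * y ^ (d - (i : ℕ))

/-- Value at `(x,y)` of `∂G/∂y` for the binary form `G` of degree `d` with coefficient
vector `b`. -/
def formEvalDy (d : ℕ) (b : Fin (d + 1) → K) (x y : K) : K :=
  ∑ i : Fin (d + 1), ((d - (i : ℕ) : ℕ) : K) * b i * x ^ (i : ℕ) * y ^ (d - (i : ℕ) - 1)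

/-- The multiplier `λ_P` at a fixed point `P = [x:y]` of the map lifted by the pair of
degree-`d` binary forms `(a, b)`, where `c` is the scalar with `F(x,y) = c⬝x` and
`G(x,y) = c⬝y`: by the trace formula, `λ = (F_x(x,y) + G_y(x,y) - d⬝c)/c`. -/
noncomputable def multiplier (d : ℕ) (a b : Fin (d + 1) → K) (x y c : K) : K :=
  (formEvalDx d a x y + formEvalDy d b x y - (d : K) * c) / c


section Stmt17Aux

open Matrix

variable {K : Type*} [Field K]

namespace Place

variable (pl : Place K)

lemma v_pow {x : K} (hx : x ≠ 0) (n : ℕ) : pl.v (x ^ n) = n * pl.v x := by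
  induction n with
  | zero => simpa using pl.v_one
  | succ n ih =>
      rw [pow_succ, pl.v_mul _ _ (pow_ne_zero n hx) hx, ih]
      push_cast
      ring

lemma v_pow_nonneg {x : K} (hx : 0 ≤ pl.v x) (n : ℕ) : 0 ≤ pl.v (x ^ n) := by
  by_cases h : x = 0
  · subst h
    rcases Nat.eq_zero_or_pos n with rfl | hn
    · simpa using le_of_eq pl.v_one.symm
    · rw [zero_pow hn.ne', pl.v_zero]
  · rw [pl.v_pow h n]
    exact mul_nonneg (Int.natCast_nonneg n) hx

end Place

lemma mem_integersAt (pl : Place K) {x : K} : x ∈ integersAt pl ↔ 0 ≤ pl.v x := Iff.rfl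

lemma extv_mul (pl : Place K) (x y : K) : extv pl (x * y) = extv pl x + extv pl y := by
  by_cases hx : x = 0
  · simp [extv, hx]
  by_cases hy : y = 0
  · simp [extv, hx, hy]
  · simp [extv, hx, hy, mul_ne_zero hx hy, pl.v_mul x y hx hy]

lemma extv_neg (pl : Place K) (x : K) : extv pl (-x) = extv pl x := by
  by_cases hx : x = 0
  · simp [extv, hx]
  · simp [extv, hx, neg_eq_zero, pl.v_neg]

lemma vec2_eta (w : Fin 2 → K) : ![w 0, w 1] = w := by
  funext i
  fin_cases i <;> simp

lemma rep_pair_ne (P : P1 K) : ¬(P.rep 0 = 0 ∧ P.rep 1 = 0) := by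
  rintro ⟨h0, h1⟩
  apply P.rep_nonzero
  funext i
  fin_cases i <;> simp [h0, h1]

open Classical in
lemma vminVec_pair (pl : Place K) (x y : K) :
    vminVec pl ![x, y] = if x = 0 then pl.v y else if y = 0 then pl.v x
      else min (pl.v x) (pl.v y) := by
  simp [vminVec]

/-- The logarithmic distance computed on explicit coordinates. -/
noncomputable def q (pl : Place K) (x₁ y₁ x₂ y₂ : K) : WithTop ℤ :=
  extv pl (x₁ * y₂ - x₂ * y₁) +
    ((-(vminVec pl ![x₁, y₁]) - vminVec pl ![x₂, y₂] : ℤ) : WithTop ℤ)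

lemma logDist_eq_q (pl : Place K) (P Q : P1 K) :
    logDist pl P Q = q pl (P.rep 0) (P.rep 1) (Q.rep 0) (Q.rep 1) := by
  rw [logDist, q, vec2_eta, vec2_eta]

lemma logDist_self (pl : Place K) (X : P1 K) : logDist pl X X = ⊤ := by
  simp [logDist, extv]

lemma vmin_scale (pl : Place K) {l x y : K} (hl : l ≠ 0) (h : ¬(x = 0 ∧ y = 0)) :
    vminVec pl ![l * x, l * y] = pl.v l + vminVec pl ![x, y] := by
  rw [vminVec_pair, vminVec_pair]
  by_cases hx : x = 0
  · have hy : y ≠ 0 := fun hy => h ⟨hx, hy⟩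
    simp [hx, mul_eq_zero, hl, hy, pl.v_mul l y hl hy]
  by_cases hy : y = 0
  · simp [hx, hy, mul_eq_zero, hl, pl.v_mul l x hl hx]
  · have h1 : l * x ≠ 0 := mul_ne_zero hl hx
    have h2 : l * y ≠ 0 := mul_ne_zero hl hy
    rw [if_neg h1, if_neg h2, if_neg hx, if_neg hy, pl.v_mul l x hl hx,
      pl.v_mul l y hl hy]
    omega

lemma q_swap (pl : Place K) (x₁ y₁ x₂ y₂ : K) :
    q pl x₂ y₂ x₁ y₁ = q pl x₁ y₁ x₂ y₂ := by
  rw [q, q, show x₂ * y₁ - x₁ * y₂ = -(x₁ * y₂ - x₂ * y₁) by ring, extv_neg]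
  congr 1
  norm_cast
  ring

lemma q_scale₁ (pl : Place K) {l : K} (hl : l ≠ 0) {x₁ y₁ : K}
    (h₁ : ¬(x₁ = 0 ∧ y₁ = 0)) (x₂ y₂ : K) :
    q pl (l * x₁) (l * y₁) x₂ y₂ = q pl x₁ y₁ x₂ y₂ := by
  rw [q, q, show l * x₁ * y₂ - x₂ * (l * y₁) = l * (x₁ * y₂ - x₂ * y₁) by ring,
    extv_mul, vmin_scale pl hl h₁]
  by_cases hD : x₁ * y₂ - x₂ * y₁ = 0
  · rw [hD]
    simp [extv, hl]
  · simp only [extv, if_neg hl, if_neg hD]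
    norm_cast
    ring

lemma q_scale₂ (pl : Place K) {l : K} (hl : l ≠ 0) (x₁ y₁ : K) {x₂ y₂ : K}
    (h₂ : ¬(x₂ = 0 ∧ y₂ = 0)) :
    q pl x₁ y₁ (l * x₂) (l * y₂) = q pl x₁ y₁ x₂ y₂ := by
  rw [← q_swap pl x₁ y₁ (l * x₂) (l * y₂), q_scale₁ pl hl h₂ x₁ y₁, q_swap]

lemma logDist_mk (pl : Place K) (x₁ y₁ x₂ y₂ : K) (h₁ : ¬(x₁ = 0 ∧ y₁ = 0))
    (h₂ : ¬(x₂ = 0 ∧ y₂ = 0)) :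
    logDist pl (P1.mk x₁ y₁ h₁) (P1.mk x₂ y₂ h₂) = q pl x₁ y₁ x₂ y₂ := by
  rw [logDist_eq_q]
  have hv₁ : (![x₁, y₁] : Fin 2 → K) ≠ 0 := fun h0 =>
    h₁ ⟨by simpa using congrFun h0 0, by simpa using congrFun h0 1⟩
  have hv₂ : (![x₂, y₂] : Fin 2 → K) ≠ 0 := fun h0 =>
    h₂ ⟨by simpa using congrFun h0 0, by simpa using congrFun h0 1⟩
  obtain ⟨c, hc⟩ := (Projectivization.mk_eq_mk_iff K _ _
    (Projectivization.rep_nonzero _) hv₁).1 (Projectivization.mk_rep (P1.mk x₁ y₁ h₁))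
  obtain ⟨e, he⟩ := (Projectivization.mk_eq_mk_iff K _ _
    (Projectivization.rep_nonzero _) hv₂).1 (Projectivization.mk_rep (P1.mk x₂ y₂ h₂))
  have e0 : (P1.mk x₁ y₁ h₁).rep 0 = (c : K) * x₁ := by
    rw [← hc]; simp [Units.smul_def]
  have e1 : (P1.mk x₁ y₁ h₁).rep 1 = (c : K) * y₁ := by
    rw [← hc]; simp [Units.smul_def]
  have f0 : (P1.mk x₂ y₂ h₂).rep 0 = (e : K) * x₂ := by
    rw [← he]; simp [Units.smul_def]
  have f1 : (P1.mk x₂ y₂ h₂).rep 1 = (e : K) * y₂ := by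
    rw [← he]; simp [Units.smul_def]
  rw [e0, e1, f0, f1, q_scale₁ pl c.ne_zero h₁, q_scale₂ pl e.ne_zero _ _ h₂]

lemma mk_smul_rep (P : P1 K) {l : K} (hl : l ≠ 0)
    (h : ¬(l * P.rep 0 = 0 ∧ l * P.rep 1 = 0)) :
    P1.mk (l * P.rep 0) (l * P.rep 1) h = P := by
  conv_rhs => rw [← Projectivization.mk_rep P]
  exact (Projectivization.mk_eq_mk_iff K _ _ _ _).2
    ⟨Units.mk0 l hl, by funext i; fin_cases i <;> simp [Units.smul_def]⟩

lemma P1mk_congr {x y x' y' : K} (hx : x = x') (hy : y = y')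
    (h : ¬(x = 0 ∧ y = 0)) (h' : ¬(x' = 0 ∧ y' = 0)) :
    P1.mk x y h = P1.mk x' y' h' := by
  subst hx; subst hy; rfl

lemma exists_normalized (pl : Place K) (x y : K) (h : ¬(x = 0 ∧ y = 0)) :
    ∃ l : K, l ≠ 0 ∧ 0 ≤ pl.v (l * x) ∧ 0 ≤ pl.v (l * y) ∧
      vminVec pl ![l * x, l * y] = 0 := by
  by_cases hx : x = 0
  · have hy : y ≠ 0 := fun hy => h ⟨hx, hy⟩
    obtain ⟨l, hl, hvl⟩ := pl.v_surj (-pl.v y)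
    refine ⟨l, hl, ?_, ?_, ?_⟩
    · rw [hx, mul_zero, pl.v_zero]
    · rw [pl.v_mul l y hl hy]; omega
    · rw [vminVec_pair, if_pos (by rw [hx, mul_zero]), pl.v_mul l y hl hy]; omega
  by_cases hy : y = 0
  · obtain ⟨l, hl, hvl⟩ := pl.v_surj (-pl.v x)
    refine ⟨l, hl, ?_, ?_, ?_⟩
    · rw [pl.v_mul l x hl hx]; omega
    · rw [hy, mul_zero, pl.v_zero]
    · rw [vminVec_pair, if_neg (mul_ne_zero hl hx), if_pos (by rw [hy, mul_zero]),
        pl.v_mul l x hl hx]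
      omega
  · obtain ⟨l, hl, hvl⟩ := pl.v_surj (-(min (pl.v x) (pl.v y)))
    refine ⟨l, hl, ?_, ?_, ?_⟩
    · rw [pl.v_mul l x hl hx]; omega
    · rw [pl.v_mul l y hl hy]; omega
    · rw [vminVec_pair, if_neg (mul_ne_zero hl hx), if_neg (mul_ne_zero hl hy),
        pl.v_mul l x hl hx, pl.v_mul l y hl hy]
      omega

lemma formEval_int (pl : Place K) {d : ℕ} {a : Fin (d + 1) → K}
    (ha : ∀ i, 0 ≤ pl.v (a i)) {x y : K} (hx : 0 ≤ pl.v x) (hy : 0 ≤ pl.v y) :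
    0 ≤ pl.v (formEval d a x y) := by
  have : formEval d a x y ∈ integersAt pl :=
    sum_mem fun i _ => mul_mem (mul_mem ((mem_integersAt pl).2 (ha i))
      (pow_mem ((mem_integersAt pl).2 hx) _)) (pow_mem ((mem_integersAt pl).2 hy) _)
  exact (mem_integersAt pl).1 this

/-- Auxiliary cofactor-type expression used to factor the cross term. -/
def Tij (d : ℕ) (x₁ y₁ x₂ y₂ : K) (i j : ℕ) : K :=
  if i ≤ j then
    -(x₁ ^ i * x₂ ^ i * (y₁ ^ (d - j) * y₂ ^ (d - j)) *
      ∑ k ∈ Finset.range (j - i), (x₂ * y₁) ^ k * (x₁ * y₂) ^ (j - i - 1 - k))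
  else
    x₁ ^ j * x₂ ^ j * (y₁ ^ (d - i) * y₂ ^ (d - i)) *
      ∑ k ∈ Finset.range (i - j), (x₂ * y₁) ^ k * (x₁ * y₂) ^ (i - j - 1 - k)

lemma Tij_mem (pl : Place K) (d : ℕ) {x₁ y₁ x₂ y₂ : K} (hx₁ : 0 ≤ pl.v x₁)
    (hy₁ : 0 ≤ pl.v y₁) (hx₂ : 0 ≤ pl.v x₂) (hy₂ : 0 ≤ pl.v y₂) (i j : ℕ) :
    Tij d x₁ y₁ x₂ y₂ i j ∈ integersAt pl := by
  have m1 : x₁ ∈ integersAt pl := (mem_integersAt pl).2 hx₁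
  have m2 : y₁ ∈ integersAt pl := (mem_integersAt pl).2 hy₁
  have m3 : x₂ ∈ integersAt pl := (mem_integersAt pl).2 hx₂
  have m4 : y₂ ∈ integersAt pl := (mem_integersAt pl).2 hy₂
  rw [Tij]
  split_ifs
  · exact neg_mem (mul_mem (mul_mem (mul_mem (pow_mem m1 _) (pow_mem m3 _))
      (mul_mem (pow_mem m2 _) (pow_mem m4 _)))
      (sum_mem fun k _ => mul_mem (pow_mem (mul_mem m3 m2) _)
        (pow_mem (mul_mem m1 m4) _)))
  · exact mul_mem (mul_mem (mul_mem (pow_mem m1 _) (pow_mem m3 _))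
      (mul_mem (pow_mem m2 _) (pow_mem m4 _)))
      (sum_mem fun k _ => mul_mem (pow_mem (mul_mem m3 m2) _)
        (pow_mem (mul_mem m1 m4) _))

lemma Tij_key_le (d : ℕ) (x₁ y₁ x₂ y₂ : K) {i j : ℕ} (hij : i ≤ j) (hjd : j ≤ d) :
    x₁ ^ i * y₁ ^ (d - i) * (x₂ ^ j * y₂ ^ (d - j)) -
      x₁ ^ j * y₁ ^ (d - j) * (x₂ ^ i * y₂ ^ (d - i)) =
    (x₁ * y₂ - x₂ * y₁) *
      (-(x₁ ^ i * x₂ ^ i * (y₁ ^ (d - j) * y₂ ^ (d - j)) *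
        ∑ k ∈ Finset.range (j - i), (x₂ * y₁) ^ k * (x₁ * y₂) ^ (j - i - 1 - k))) := by
  obtain ⟨m, rfl⟩ := Nat.exists_eq_add_of_le hij
  rw [show i + m - i = m by omega, show d - i = (d - (i + m)) + m by omega]
  have hg := geom_sum₂_mul (x₂ * y₁) (x₁ * y₂) m
  linear_combination (-(x₁ ^ i * x₂ ^ i * (y₁ ^ (d - (i + m)) * y₂ ^ (d - (i + m))))) * hg

lemma Tij_key (d : ℕ) (x₁ y₁ x₂ y₂ : K) {i j : ℕ} (hid : i ≤ d) (hjd : j ≤ d) :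
    x₁ ^ i * y₁ ^ (d - i) * (x₂ ^ j * y₂ ^ (d - j)) -
      x₁ ^ j * y₁ ^ (d - j) * (x₂ ^ i * y₂ ^ (d - i)) =
    (x₁ * y₂ - x₂ * y₁) * Tij d x₁ y₁ x₂ y₂ i j := by
  rcases le_or_gt i j with hij | hij
  · rw [Tij, if_pos hij]
    exact Tij_key_le d x₁ y₁ x₂ y₂ hij hjd
  · rw [Tij, if_neg (not_le.mpr hij)]
    have h := Tij_key_le d x₁ y₁ x₂ y₂ (le_of_lt hij) hid
    linear_combination (-1 : K) * h

lemma cross_image (pl : Place K) (d : ℕ) (a b : Fin (d + 1) → K)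
    (ha : ∀ i, 0 ≤ pl.v (a i)) (hb : ∀ i, 0 ≤ pl.v (b i))
    {x₁ y₁ x₂ y₂ : K} (hx₁ : 0 ≤ pl.v x₁) (hy₁ : 0 ≤ pl.v y₁)
    (hx₂ : 0 ≤ pl.v x₂) (hy₂ : 0 ≤ pl.v y₂) :
    ∃ T : K, 0 ≤ pl.v T ∧
      formEval d a x₁ y₁ * formEval d b x₂ y₂ -
        formEval d a x₂ y₂ * formEval d b x₁ y₁ = (x₁ * y₂ - x₂ * y₁) * T := by
  refine ⟨∑ i : Fin (d + 1), ∑ j : Fin (d + 1),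
    a i * b j * Tij d x₁ y₁ x₂ y₂ (i : ℕ) (j : ℕ), ?_, ?_⟩
  · refine (mem_integersAt pl).1 (sum_mem fun i _ => sum_mem fun j _ => ?_)
    exact mul_mem (mul_mem ((mem_integersAt pl).2 (ha i)) ((mem_integersAt pl).2 (hb j)))
      (Tij_mem pl d hx₁ hy₁ hx₂ hy₂ _ _)
  · rw [formEval, formEval, formEval, formEval, Finset.sum_mul_sum, Finset.sum_mul_sum,
      Finset.mul_sum, ← Finset.sum_sub_distrib]
    refine Finset.sum_congr rfl fun i _ => ?_
    rw [← Finset.sum_sub_distrib, Finset.mul_sum]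
    refine Finset.sum_congr rfl fun j _ => ?_
    have h := Tij_key d x₁ y₁ x₂ y₂ (Nat.lt_succ_iff.mp i.isLt) (Nat.lt_succ_iff.mp j.isLt)
    linear_combination (a i * b j) * h

lemma sylvester_mulVec (d : ℕ) (a b : Fin (d + 1) → K) (x y : K) (i : Fin (d + d)) :
    (sylvester d a b *ᵥ fun j : Fin (d + d) => x ^ (j : ℕ) * y ^ (d + d - 1 - (j : ℕ))) i =
      if (i : ℕ) < d then x ^ (i : ℕ) * y ^ (d - 1 - (i : ℕ)) * formEval d a x y
      else x ^ ((i : ℕ) - d) * y ^ (d + d - 1 - (i : ℕ)) * formEval d b x y := by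
  classical
  have hi2 : (i : ℕ) < d + d := i.isLt
  have hmv : (sylvester d a b *ᵥ fun j : Fin (d + d) =>
      x ^ (j : ℕ) * y ^ (d + d - 1 - (j : ℕ))) i =
      ∑ j : Fin (d + d), sylvester d a b i j * (x ^ (j : ℕ) * y ^ (d + d - 1 - (j : ℕ))) := by
    simp [Matrix.mulVec, dotProduct]
  rw [hmv]
  by_cases hi : (i : ℕ) < d
  · rw [if_pos hi]
    set A : ℕ → K := fun n => if h : n < d + 1 then a ⟨n, h⟩ else 0 with hA
    have hF : x ^ (i : ℕ) * y ^ (d - 1 - (i : ℕ)) * formEval d a x y =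
        ∑ n ∈ Finset.range (d + 1),
          A n * (x ^ ((i : ℕ) + n) * y ^ (d + d - 1 - ((i : ℕ) + n))) := by
      rw [formEval, Finset.mul_sum,
        ← Fin.sum_univ_eq_sum_range
          (fun n => A n * (x ^ ((i : ℕ) + n) * y ^ (d + d - 1 - ((i : ℕ) + n)))) (d + 1)]
      refine Finset.sum_congr rfl fun k _ => ?_
      have hk := k.isLt
      have hAk : A (k : ℕ) = a k := by rw [hA]; exact dif_pos hk
      rw [hAk, pow_add,
        show d + d - 1 - ((i : ℕ) + (k : ℕ)) = (d - 1 - (i : ℕ)) + (d - (k : ℕ)) by omega,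
        pow_add]
      ring
    have hL : ∀ j : Fin (d + d),
        sylvester d a b i j * (x ^ (j : ℕ) * y ^ (d + d - 1 - (j : ℕ))) =
        (fun n : ℕ => (if (i : ℕ) ≤ n ∧ n ≤ (i : ℕ) + d then A (n - (i : ℕ)) else 0) *
          (x ^ n * y ^ (d + d - 1 - n))) (j : ℕ) := by
      intro j
      simp only
      congr 1
      simp only [sylvester, Matrix.of_apply]
      rw [dif_pos hi]
      by_cases hcond : (i : ℕ) ≤ (j : ℕ) ∧ (j : ℕ) ≤ (i : ℕ) + d
      · rw [dif_pos hcond, if_pos hcond]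
        simp only [hA]
        rw [dif_pos (by omega : (j : ℕ) - (i : ℕ) < d + 1)]
      · rw [dif_neg hcond, if_neg hcond]
    rw [Finset.sum_congr rfl fun j _ => hL j,
      Fin.sum_univ_eq_sum_range
        (fun n : ℕ => (if (i : ℕ) ≤ n ∧ n ≤ (i : ℕ) + d then A (n - (i : ℕ)) else 0) *
          (x ^ n * y ^ (d + d - 1 - n))) (d + d),
      ← Finset.sum_subset
        (show Finset.Ico (i : ℕ) ((i : ℕ) + d + 1) ⊆ Finset.range (d + d) from
          fun n hn => by
            rw [Finset.mem_Ico] at hn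
            rw [Finset.mem_range]
            omega)
        (fun n hn hn' => by
          rw [if_neg fun hc => hn' (Finset.mem_Ico.mpr ⟨hc.1, by omega⟩), zero_mul]),
      Finset.sum_Ico_eq_sum_range, show (i : ℕ) + d + 1 - (i : ℕ) = d + 1 by omega, hF]
    refine Finset.sum_congr rfl fun n hn => ?_
    have hn' : n < d + 1 := Finset.mem_range.mp hn
    rw [if_pos ⟨Nat.le_add_right _ _, by omega⟩, show (i : ℕ) + n - (i : ℕ) = n by omega]
  · rw [if_neg hi]
    set B : ℕ → K := fun n => if h : n < d + 1 then b ⟨n, h⟩ else 0 with hB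
    have hF : x ^ ((i : ℕ) - d) * y ^ (d + d - 1 - (i : ℕ)) * formEval d b x y =
        ∑ n ∈ Finset.range (d + 1),
          B n * (x ^ (((i : ℕ) - d) + n) * y ^ (d + d - 1 - (((i : ℕ) - d) + n))) := by
      rw [formEval, Finset.mul_sum,
        ← Fin.sum_univ_eq_sum_range
          (fun n => B n * (x ^ (((i : ℕ) - d) + n) *
            y ^ (d + d - 1 - (((i : ℕ) - d) + n)))) (d + 1)]
      refine Finset.sum_congr rfl fun k _ => ?_
      have hk := k.isLt
      have hBk : B (k : ℕ) = b k := by rw [hB]; exact dif_pos hk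
      rw [hBk, pow_add,
        show d + d - 1 - (((i : ℕ) - d) + (k : ℕ)) =
          (d + d - 1 - (i : ℕ)) + (d - (k : ℕ)) by omega,
        pow_add]
      ring
    have hL : ∀ j : Fin (d + d),
        sylvester d a b i j * (x ^ (j : ℕ) * y ^ (d + d - 1 - (j : ℕ))) =
        (fun n : ℕ => (if (i : ℕ) - d ≤ n ∧ n ≤ (i : ℕ) then B (n - ((i : ℕ) - d)) else 0) *
          (x ^ n * y ^ (d + d - 1 - n))) (j : ℕ) := by
      intro j
      simp only
      congr 1
      simp only [sylvester, Matrix.of_apply]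
      rw [dif_neg hi]
      by_cases hcond : (i : ℕ) - d ≤ (j : ℕ) ∧ (j : ℕ) ≤ (i : ℕ)
      · rw [dif_pos hcond, if_pos hcond]
        simp only [hB]
        rw [dif_pos (by omega : (j : ℕ) - ((i : ℕ) - d) < d + 1)]
      · rw [dif_neg hcond, if_neg hcond]
    rw [Finset.sum_congr rfl fun j _ => hL j,
      Fin.sum_univ_eq_sum_range
        (fun n : ℕ => (if (i : ℕ) - d ≤ n ∧ n ≤ (i : ℕ) then B (n - ((i : ℕ) - d)) else 0) *
          (x ^ n * y ^ (d + d - 1 - n))) (d + d),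
      ← Finset.sum_subset
        (show Finset.Ico ((i : ℕ) - d) ((i : ℕ) + 1) ⊆ Finset.range (d + d) from
          fun n hn => by
            rw [Finset.mem_Ico] at hn
            rw [Finset.mem_range]
            omega)
        (fun n hn hn' => by
          rw [if_neg fun hc => hn' (Finset.mem_Ico.mpr ⟨hc.1, by omega⟩), zero_mul]),
      Finset.sum_Ico_eq_sum_range, show (i : ℕ) + 1 - ((i : ℕ) - d) = d + 1 by omega, hF]
    refine Finset.sum_congr rfl fun n hn => ?_
    have hn' : n < d + 1 := Finset.mem_range.mp hn
    rw [if_pos ⟨Nat.le_add_right _ _, by omega⟩,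
      show (i : ℕ) - d + n - ((i : ℕ) - d) = n by omega]

lemma sylvester_entry_int (pl : Place K) (d : ℕ) {a b : Fin (d + 1) → K}
    (ha : ∀ i, 0 ≤ pl.v (a i)) (hb : ∀ i, 0 ≤ pl.v (b i)) (i j : Fin (d + d)) :
    0 ≤ pl.v (sylvester d a b i j) := by
  simp only [sylvester, Matrix.of_apply]
  split_ifs
  · exact ha _
  · exact le_of_eq pl.v_zero.symm
  · exact hb _
  · exact le_of_eq pl.v_zero.symm

lemma adjugate_sylvester_int (pl : Place K) (d : ℕ) {a b : Fin (d + 1) → K}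
    (ha : ∀ i, 0 ≤ pl.v (a i)) (hb : ∀ i, 0 ≤ pl.v (b i)) (i j : Fin (d + d)) :
    0 ≤ pl.v ((sylvester d a b).adjugate i j) := by
  let f : ↥(integersAt pl) →+* K := (integersAt pl).subtype
  let M : Matrix (Fin (d + d)) (Fin (d + d)) ↥(integersAt pl) :=
    fun i j => ⟨sylvester d a b i j, sylvester_entry_int pl d ha hb i j⟩
  have hM : f.mapMatrix M = sylvester d a b := by
    ext i j
    rfl
  have h2 := RingHom.map_adjugate f M
  rw [hM] at h2
  rw [← h2]
  exact (M.adjugate i j).2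

lemma resultant_smul_eq (d : ℕ) (a b : Fin (d + 1) → K) (x y : K) (j : Fin (d + d)) :
    resultant d a b * (x ^ (j : ℕ) * y ^ (d + d - 1 - (j : ℕ))) =
      ∑ i : Fin (d + d), (sylvester d a b).adjugate j i *
        (if (i : ℕ) < d then x ^ (i : ℕ) * y ^ (d - 1 - (i : ℕ)) * formEval d a x y
          else x ^ ((i : ℕ) - d) * y ^ (d + d - 1 - (i : ℕ)) * formEval d b x y) := by
  have h1 : (sylvester d a b).adjugate *ᵥ
      (sylvester d a b *ᵥ fun j : Fin (d + d) => x ^ (j : ℕ) * y ^ (d + d - 1 - (j : ℕ))) =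
      resultant d a b • fun j : Fin (d + d) => x ^ (j : ℕ) * y ^ (d + d - 1 - (j : ℕ)) := by
    rw [Matrix.mulVec_mulVec, Matrix.adjugate_mul, Matrix.smul_mulVec,
      Matrix.one_mulVec]
    rfl
  have h2 : (sylvester d a b *ᵥ fun j : Fin (d + d) =>
      x ^ (j : ℕ) * y ^ (d + d - 1 - (j : ℕ))) = fun i : Fin (d + d) =>
      if (i : ℕ) < d then x ^ (i : ℕ) * y ^ (d - 1 - (i : ℕ)) * formEval d a x y
      else x ^ ((i : ℕ) - d) * y ^ (d + d - 1 - (i : ℕ)) * formEval d b x y :=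
    funext (sylvester_mulVec d a b x y)
  rw [h2] at h1
  have h3 := congrFun h1 j
  simp only [Matrix.mulVec, dotProduct, Pi.smul_apply, smul_eq_mul] at h3
  exact h3.symm

lemma vmin_image (pl : Place K) {d : ℕ} (hd : 0 < d) (a b : Fin (d + 1) → K)
    (ha : ∀ i, 0 ≤ pl.v (a i)) (hb : ∀ i, 0 ≤ pl.v (b i))
    (hvres : pl.v (resultant d a b) = 0) (hres : resultant d a b ≠ 0)
    {x y : K} (h : ¬(x = 0 ∧ y = 0)) (hx : 0 ≤ pl.v x) (hy : 0 ≤ pl.v y)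
    (hm : vminVec pl ![x, y] = 0) :
    vminVec pl ![formEval d a x y, formEval d b x y] = 0 := by
  have hFint : 0 ≤ pl.v (formEval d a x y) := formEval_int pl ha hx hy
  have hGint : 0 ≤ pl.v (formEval d b x y) := formEval_int pl hb hx hy
  have hnot : ¬((formEval d a x y = 0 ∨ 0 < pl.v (formEval d a x y)) ∧
      (formEval d b x y = 0 ∨ 0 < pl.v (formEval d b x y))) := by
    rintro ⟨hF, hG⟩
    have hmk : ∀ j : Fin (d + d),
        resultant d a b * (x ^ (j : ℕ) * y ^ (d + d - 1 - (j : ℕ))) = 0 ∨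
        0 < pl.v (resultant d a b * (x ^ (j : ℕ) * y ^ (d + d - 1 - (j : ℕ)))) := by
      intro j
      rw [resultant_smul_eq d a b x y j]
      refine Finset.sum_induction _ (fun z => z = 0 ∨ 0 < pl.v z)
        (fun u v hu hv => pl.hred_add hu hv) (Or.inl rfl) fun i _ => ?_
      refine pl.hred_mul (adjugate_sylvester_int pl d ha hb j i) ?_
      by_cases hc : (i : ℕ) < d
      · rw [if_pos hc]
        exact pl.hred_mul (pl.v_mul_nonneg (pl.v_pow_nonneg hx _) (pl.v_pow_nonneg hy _)) hF
      · rw [if_neg hc]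
        exact pl.hred_mul (pl.v_mul_nonneg (pl.v_pow_nonneg hx _) (pl.v_pow_nonneg hy _)) hG
    have hxx : x = 0 ∨ 0 < pl.v x := by
      have hj : resultant d a b * (x ^ (d + d - 1) * y ^ (d + d - 1 - (d + d - 1))) = 0 ∨
          0 < pl.v (resultant d a b * (x ^ (d + d - 1) * y ^ (d + d - 1 - (d + d - 1)))) :=
        hmk ⟨d + d - 1, by omega⟩
      rw [show d + d - 1 - (d + d - 1) = 0 by omega, pow_zero, mul_one] at hj
      rcases hj with h0 | hpos
      · rcases mul_eq_zero.mp h0 with h0' | h0'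
        · exact absurd h0' hres
        · exact Or.inl (pow_eq_zero_iff (by omega : d + d - 1 ≠ 0) |>.mp h0')
      · by_cases hx0 : x = 0
        · exact Or.inl hx0
        · right
          rw [pl.v_mul _ _ hres (pow_ne_zero _ hx0), hvres, pl.v_pow hx0] at hpos
          by_contra hvx
          push_neg at hvx
          have hle : ((d + d - 1 : ℕ) : ℤ) * pl.v x ≤ 0 :=
            mul_nonpos_of_nonneg_of_nonpos (Int.natCast_nonneg _) hvx
          omega
    have hyy : y = 0 ∨ 0 < pl.v y := by
      have hj : resultant d a b * (x ^ 0 * y ^ (d + d - 1 - 0)) = 0 ∨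
          0 < pl.v (resultant d a b * (x ^ 0 * y ^ (d + d - 1 - 0))) :=
        hmk ⟨0, by omega⟩
      rw [pow_zero, one_mul, Nat.sub_zero] at hj
      rcases hj with h0 | hpos
      · rcases mul_eq_zero.mp h0 with h0' | h0'
        · exact absurd h0' hres
        · exact Or.inl (pow_eq_zero_iff (by omega : d + d - 1 ≠ 0) |>.mp h0')
      · by_cases hy0 : y = 0
        · exact Or.inl hy0
        · right
          rw [pl.v_mul _ _ hres (pow_ne_zero _ hy0), hvres, pl.v_pow hy0] at hpos
          by_contra hvy
          push_neg at hvy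
          have hle : ((d + d - 1 : ℕ) : ℤ) * pl.v y ≤ 0 :=
            mul_nonpos_of_nonneg_of_nonpos (Int.natCast_nonneg _) hvy
          omega
    rw [vminVec_pair] at hm
    rcases hxx with hx0 | hxpos <;> rcases hyy with hy0 | hypos
    · exact h ⟨hx0, hy0⟩
    · rw [if_pos hx0] at hm
      omega
    · have hxne : x ≠ 0 := fun h' => by
        rw [h', pl.v_zero] at hxpos
        exact lt_irrefl 0 hxpos
      rw [if_neg hxne, if_pos hy0] at hm
      omega
    · have hxne : x ≠ 0 := fun h' => by
        rw [h', pl.v_zero] at hxpos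
        exact lt_irrefl 0 hxpos
      have hyne : y ≠ 0 := fun h' => by
        rw [h', pl.v_zero] at hypos
        exact lt_irrefl 0 hypos
      rw [if_neg hxne, if_neg hyne] at hm
      omega
  rcases not_and_or.mp hnot with hF | hG
  · push_neg at hF
    have hF0 : pl.v (formEval d a x y) = 0 := le_antisymm hF.2 hFint
    rw [vminVec_pair, if_neg hF.1]
    by_cases hG0 : formEval d b x y = 0
    · rw [if_pos hG0]
      exact hF0
    · rw [if_neg hG0]
      omega
  · push_neg at hG
    have hG0 : pl.v (formEval d b x y) = 0 := le_antisymm hG.2 hGint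
    rw [vminVec_pair]
    by_cases hF0 : formEval d a x y = 0
    · rw [if_pos hF0]
      exact hG0
    · rw [if_neg hF0, if_neg hG.1]
      omega

lemma core_ineq (pl : Place K) {d : ℕ} (hd : 0 < d) (a b : Fin (d + 1) → K)
    (ha : ∀ i, 0 ≤ pl.v (a i)) (hb : ∀ i, 0 ≤ pl.v (b i))
    (hvres : pl.v (resultant d a b) = 0) (hres : resultant d a b ≠ 0)
    {x₁ y₁ x₂ y₂ : K} (h₁ : ¬(x₁ = 0 ∧ y₁ = 0)) (h₂ : ¬(x₂ = 0 ∧ y₂ = 0))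
    (hx₁ : 0 ≤ pl.v x₁) (hy₁ : 0 ≤ pl.v y₁) (hm₁ : vminVec pl ![x₁, y₁] = 0)
    (hx₂ : 0 ≤ pl.v x₂) (hy₂ : 0 ≤ pl.v y₂) (hm₂ : vminVec pl ![x₂, y₂] = 0) :
    q pl x₁ y₁ x₂ y₂ ≤
      q pl (formEval d a x₁ y₁) (formEval d b x₁ y₁)
        (formEval d a x₂ y₂) (formEval d b x₂ y₂) := by
  obtain ⟨T, hT, hEq⟩ := cross_image pl d a b ha hb hx₁ hy₁ hx₂ hy₂
  rw [q, q, hm₁, hm₂, vmin_image pl hd a b ha hb hvres hres h₁ hx₁ hy₁ hm₁,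
    vmin_image pl hd a b ha hb hvres hres h₂ hx₂ hy₂ hm₂, hEq]
  refine add_le_add ?_ le_rfl
  rw [extv_mul]
  refine le_add_of_nonneg_right ?_
  by_cases hT0 : T = 0
  · simp [extv, hT0]
  · simp only [extv, if_neg hT0]
    exact_mod_cast hT

end Stmt17Aux

/-- Proposition 5.2 of Morton–Silverman.  Let `K` be a global field,
`𝔭` a non-archimedean place of `K` and `φ : ℙ¹ → ℙ¹` a morphism defined over `K` with
good reduction at `𝔭`.  Then `δ_𝔭(φ(P), φ(Q)) ≥ δ_𝔭(P, Q)` for all `P, Q ∈ ℙ¹(K)`. -/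
theorem stmt17 (K : Type) [Field K] (hK : IsGlobalField K) (pl : Place K)
    (φ : P1 K → P1 K) (hφ : IsEndo φ) (hgood : GoodReduction pl φ)
    (P Q : P1 K) : logDist pl P Q ≤ logDist pl (φ P) (φ Q) := by
  obtain ⟨d, a, b, ⟨hres, hlift⟩, ha, hb, hvres⟩ := hgood
  by_cases hd : d = 0
  · subst hd
    have h₁ : ¬((1 : K) * P.rep 0 = 0 ∧ (1 : K) * P.rep 1 = 0) := by
      simpa [one_mul] using rep_pair_ne P
    have h₂ : ¬((1 : K) * Q.rep 0 = 0 ∧ (1 : K) * Q.rep 1 = 0) := by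
      simpa [one_mul] using rep_pair_ne Q
    have hPmk : P1.mk (1 * P.rep 0) (1 * P.rep 1) h₁ = P := mk_smul_rep P one_ne_zero h₁
    have hQmk : P1.mk (1 * Q.rep 0) (1 * Q.rep 1) h₂ = Q := mk_smul_rep Q one_ne_zero h₂
    obtain ⟨h₁', hP⟩ := hlift (1 * P.rep 0) (1 * P.rep 1) h₁
    obtain ⟨h₂', hQ⟩ := hlift (1 * Q.rep 0) (1 * Q.rep 1) h₂
    have hconst : ∀ x y : K, formEval 0 a x y = a 0 ∧ formEval 0 b x y = b 0 := by
      intro x y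
      constructor <;> simp [formEval]
    have hPQ : φ P = φ Q := by
      rw [← hPmk, ← hQmk, hP, hQ]
      exact P1mk_congr
        (by rw [(hconst _ _).1, (hconst _ _).1])
        (by rw [(hconst _ _).2, (hconst _ _).2]) _ _
    rw [hPQ, logDist_self]
    exact le_top
  · have hd' : 0 < d := Nat.pos_of_ne_zero hd
    obtain ⟨l₁, hl₁, hvx₁, hvy₁, hm₁⟩ :=
      exists_normalized pl (P.rep 0) (P.rep 1) (rep_pair_ne P)
    obtain ⟨l₂, hl₂, hvx₂, hvy₂, hm₂⟩ :=
      exists_normalized pl (Q.rep 0) (Q.rep 1) (rep_pair_ne Q)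
    have h₁ : ¬(l₁ * P.rep 0 = 0 ∧ l₁ * P.rep 1 = 0) := by
      rintro ⟨u0, u1⟩
      exact rep_pair_ne P ⟨by rcases mul_eq_zero.mp u0 with h' | h' <;> tauto,
        by rcases mul_eq_zero.mp u1 with h' | h' <;> tauto⟩
    have h₂ : ¬(l₂ * Q.rep 0 = 0 ∧ l₂ * Q.rep 1 = 0) := by
      rintro ⟨u0, u1⟩
      exact rep_pair_ne Q ⟨by rcases mul_eq_zero.mp u0 with h' | h' <;> tauto,
        by rcases mul_eq_zero.mp u1 with h' | h' <;> tauto⟩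
    have hPmk : P1.mk (l₁ * P.rep 0) (l₁ * P.rep 1) h₁ = P := mk_smul_rep P hl₁ h₁
    have hQmk : P1.mk (l₂ * Q.rep 0) (l₂ * Q.rep 1) h₂ = Q := mk_smul_rep Q hl₂ h₂
    obtain ⟨hF₁, hφP⟩ := hlift (l₁ * P.rep 0) (l₁ * P.rep 1) h₁
    obtain ⟨hF₂, hφQ⟩ := hlift (l₂ * Q.rep 0) (l₂ * Q.rep 1) h₂
    have e1 : logDist pl P Q =
        q pl (l₁ * P.rep 0) (l₁ * P.rep 1) (l₂ * Q.rep 0) (l₂ * Q.rep 1) := by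
      conv_lhs => rw [← hPmk, ← hQmk]
      exact logDist_mk pl _ _ _ _ h₁ h₂
    have e2 : logDist pl (φ P) (φ Q) =
        q pl (formEval d a (l₁ * P.rep 0) (l₁ * P.rep 1))
          (formEval d b (l₁ * P.rep 0) (l₁ * P.rep 1))
          (formEval d a (l₂ * Q.rep 0) (l₂ * Q.rep 1))
          (formEval d b (l₂ * Q.rep 0) (l₂ * Q.rep 1)) := by
      conv_lhs => rw [← hPmk, ← hQmk]
      rw [hφP, hφQ]
      exact logDist_mk pl _ _ _ _ hF₁ hF₂
    rw [e1, e2]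
    exact core_ineq pl hd' a b ha hb hvres hres h₁ h₂ hvx₁ hvy₁ hm₁ hvx₂ hvy₂ hm₂

end ArxivPreper
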